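/- Under the assumptions of the previous setting (A a J×I nonnegative matrix with all column sums ≤ 1, q ∈ ℝ^I_{≥0} with A_j q > 0 for all j, δ ∈ ℝ^I_{>0}, and δ'_i = δ_i · Π_j (A_j q / A_j δ)^{a_{ji}}), for every z ∈ ℝ^I_{>0}: D(z, δ') ≤ D(z, δ) − Σ_j A_j z · log(A_j q / A_j δ) + Σ_j A_j q − Σ_j A_j δ, where D is the Bregman divergence D(t,u) = Σ_i t_i log(t_i/u_i) − (Σ_i t_i − Σ_i u_i). -/

import Mathlib

open Finset Real

/-- Weighted AM-GM with total weight at most one. -/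
lemma gis_amgm {J : ℕ} (w r : Fin J → ℝ) (hw : ∀ j, 0 ≤ w j)
    (hw1 : ∑ j, w j ≤ 1) (hr : ∀ j, 0 ≤ r j) :
    (∏ j, r j ^ w j) ≤ (∑ j, w j * r j) + (1 - ∑ j, w j) := by
  have h := Real.geom_mean_le_arith_mean_weighted (Finset.univ : Finset (Option (Fin J)))
    (fun o => o.elim (1 - ∑ j, w j) w) (fun o => o.elim 1 r)
    (fun o _ => by
      cases o with
      | none => simpa using hw1
      | some j => exact hw j)
    (by rw [Fintype.sum_option]; simp)
    (fun o _ => by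
      cases o with
      | none => exact zero_le_one
      | some j => exact hr j)
  rw [Fintype.prod_option, Fintype.sum_option] at h
  simp only [Option.elim_none, Option.elim_some, Real.one_rpow, one_mul, mul_one] at h
  linarith

/-- One GIS update step decreases the Bregman divergence to any positive vector `z`
by at least `Σⱼ Aⱼz · log(Aⱼq/Aⱼδ) − Σⱼ Aⱼq + Σⱼ Aⱼδ`. -/
theorem gis_step_bregman_le (J I : ℕ) (A : Fin J → Fin I → ℝ)
    (hA : ∀ j i, 0 ≤ A j i) (hcol : ∀ i, (∑ j, A j i) ≤ 1)
    (q : Fin I → ℝ) (hq : ∀ i, 0 ≤ q i)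
    (hAq : ∀ j, 0 < ∑ i, A j i * q i)
    (δ : Fin I → ℝ) (hδ : ∀ i, 0 < δ i)
    (δ' : Fin I → ℝ)
    (hδ' : ∀ i, δ' i =
      δ i * ∏ j, ((∑ i', A j i' * q i') / (∑ i', A j i' * δ i')) ^ (A j i))
    (z : Fin I → ℝ) (hz : ∀ i, 0 < z i) :
    (∑ i, z i * Real.log (z i / δ' i)) - ((∑ i, z i) - (∑ i, δ' i)) ≤
      ((∑ i, z i * Real.log (z i / δ i)) - ((∑ i, z i) - (∑ i, δ i)))
      - (∑ j, (∑ i, A j i * z i) *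
          Real.log ((∑ i, A j i * q i) / (∑ i, A j i * δ i)))
      + (∑ j, ∑ i, A j i * q i) - (∑ j, ∑ i, A j i * δ i) := by
  have hAδ : ∀ j, 0 < ∑ i, A j i * δ i := by
    intro j
    rcases (Finset.sum_nonneg fun i _ => mul_nonneg (hA j i) (hδ i).le).lt_or_eq with h | h
    · exact h
    · exfalso
      have hz0 : ∀ i ∈ (Finset.univ : Finset (Fin I)), A j i * δ i = 0 :=
        (Finset.sum_eq_zero_iff_of_nonneg fun i _ =>
          mul_nonneg (hA j i) (hδ i).le).1 h.symm
      have h0 : (∑ i, A j i * q i) = 0 := Finset.sum_eq_zero fun i _ => by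
        have h' := hz0 i (Finset.mem_univ i)
        have hA0 : A j i = 0 := by
          rcases mul_eq_zero.1 h' with h'' | h''
          · exact h''
          · exact absurd h'' (hδ i).ne'
        simp [hA0]
      exact (hAq j).ne' h0
  set r : Fin J → ℝ := fun j => (∑ i, A j i * q i) / (∑ i, A j i * δ i) with hr_def
  have hrpos : ∀ j, 0 < r j := fun j => div_pos (hAq j) (hAδ j)
  have hδ'pos : ∀ i, 0 < δ' i := fun i => by
    rw [hδ' i]
    exact mul_pos (hδ i) (Finset.prod_pos fun j _ => Real.rpow_pos_of_pos (hrpos j) _)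
  -- log of the update
  have hlogδ' : ∀ i, Real.log (δ' i) = Real.log (δ i) + ∑ j, A j i * Real.log (r j) := by
    intro i
    rw [hδ' i, Real.log_mul (hδ i).ne'
        (Finset.prod_ne_zero_iff.2 fun j _ => (Real.rpow_pos_of_pos (hrpos j) _).ne'),
      Real.log_prod (fun j _ => (Real.rpow_pos_of_pos (hrpos j) _).ne')]
    congr 1
    exact Finset.sum_congr rfl fun j _ => Real.log_rpow (hrpos j) _
  -- the entropy term
  have key1 : (∑ i, z i * Real.log (z i / δ' i))
      = (∑ i, z i * Real.log (z i / δ i))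
        - ∑ j, (∑ i, A j i * z i) * Real.log (r j) := by
    have e1 : ∀ i, z i * Real.log (z i / δ' i)
        = z i * Real.log (z i / δ i) - ∑ j, A j i * z i * Real.log (r j) := by
      intro i
      rw [Real.log_div (hz i).ne' (hδ'pos i).ne', hlogδ' i,
        Real.log_div (hz i).ne' (hδ i).ne']
      have e2 : z i * (Real.log (z i) - (Real.log (δ i) + ∑ j, A j i * Real.log (r j)))
          = z i * (Real.log (z i) - Real.log (δ i))
            - z i * ∑ j, A j i * Real.log (r j) := by ring
      rw [e2, Finset.mul_sum]
      congr 1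
      exact Finset.sum_congr rfl fun j _ => by ring
    rw [Finset.sum_congr rfl fun i _ => e1 i, Finset.sum_sub_distrib]
    congr 1
    rw [Finset.sum_comm]
    exact Finset.sum_congr rfl fun j _ => by rw [Finset.sum_mul]
  -- the mass term
  have key2 : (∑ i, δ' i) ≤ (∑ i, δ i)
      + (∑ j, ∑ i, A j i * q i) - (∑ j, ∑ i, A j i * δ i) := by
    have h1 : ∀ i, δ' i ≤ δ i + ∑ j, A j i * δ i * (r j - 1) := by
      intro i
      have hgm := gis_amgm (fun j => A j i) r (fun j => hA j i) (hcol i)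
        (fun j => (hrpos j).le)
      have h2 : δ' i ≤ δ i * ((∑ j, A j i * r j) + (1 - ∑ j, A j i)) := by
        rw [hδ' i]
        exact mul_le_mul_of_nonneg_left hgm (hδ i).le
      refine h2.trans_eq ?_
      have e1 : δ i * ((∑ j, A j i * r j) + (1 - ∑ j, A j i))
          = δ i + ((∑ j, δ i * (A j i * r j)) - ∑ j, δ i * (A j i)) := by
        rw [← Finset.mul_sum, ← Finset.mul_sum]; ring
      rw [e1, ← Finset.sum_sub_distrib]
      congr 1
      exact Finset.sum_congr rfl fun j _ => by ring
    calc (∑ i, δ' i) ≤ ∑ i, (δ i + ∑ j, A j i * δ i * (r j - 1)) :=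
          Finset.sum_le_sum fun i _ => h1 i
      _ = (∑ i, δ i) + ∑ j, (r j - 1) * ∑ i, A j i * δ i := by
          rw [Finset.sum_add_distrib]
          congr 1
          rw [Finset.sum_comm]
          exact Finset.sum_congr rfl fun j _ => by
            rw [Finset.mul_sum]
            exact Finset.sum_congr rfl fun i _ => by ring
      _ = (∑ i, δ i) + (∑ j, ∑ i, A j i * q i) - (∑ j, ∑ i, A j i * δ i) := by
          rw [add_sub_assoc, ← Finset.sum_sub_distrib]
          congr 1
          refine Finset.sum_congr rfl fun j _ => ?_
          have : r j * (∑ i, A j i * δ i) = ∑ i, A j i * q i := by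
            rw [hr_def]
            exact div_mul_cancel₀ _ (hAδ j).ne'
          nlinarith [this]
  rw [key1]
  linarith [key2]
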